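/- Let n be a positive integer, x = (x_1,...,x_n) and y = (y_1,...,y_n) be n-tuples of complex numbers, p = (p_1,...,p_n) nonnegative real weights with ∑_{i=1}^n p_i = 1, and γ, Γ ∈ ℂ with Γ ≠ γ and Γ ≠ -γ. If ∑_{i=1}^n p_i | x_i - ((γ + Γ)/2) · conj(y_i) |^2 ≤ (1/4) |Γ - γ|^2 ∑_{i=1}^n p_i |y_i|^2, then 0 ≤ ( (∑_{i=1}^n p_i |x_i|^2)(∑_{i=1}^n p_i |y_i|^2) )^{1/2} - | ∑_{i=1}^n p_i x_i y_i | ≤ ( (∑_{i=1}^n p_i |x_i|^2)(∑_{i=1}^n p_i |y_i|^2) )^{1/2} - ∑_{i=1}^n p_i Re[ ((conj(Γ) + conj(γ))/|Γ + γ|) x_i y_i ] ≤ (1/4) · (|Γ - γ|^2/|Γ + γ|) · ∑_{i=1}^n p_i |y_i|^2. -/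

import Mathlib

theorem stmt_17 (n : ℕ) (hn : 0 < n) (x y : Fin n → ℂ) (p : Fin n → ℝ)
    (hp : ∀ k, 0 ≤ p k) (hp1 : ∑ i, p i = 1)
    (γ Γ : ℂ) (hne : Γ ≠ γ) (hne' : Γ ≠ -γ)
    (h : ∑ i, p i * ‖x i - ((γ + Γ) / 2) * (starRingEnd ℂ) (y i)‖ ^ 2
        ≤ (1 / 4) * ‖Γ - γ‖ ^ 2 * ∑ i, p i * ‖y i‖ ^ 2) :
    0 ≤ ((∑ i, p i * ‖x i‖ ^ 2) * (∑ i, p i * ‖y i‖ ^ 2)) ^ ((1 : ℝ) / 2)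
        - ‖∑ i, (p i : ℂ) * x i * y i‖
    ∧ ((∑ i, p i * ‖x i‖ ^ 2) * (∑ i, p i * ‖y i‖ ^ 2)) ^ ((1 : ℝ) / 2)
        - ‖∑ i, (p i : ℂ) * x i * y i‖
      ≤ ((∑ i, p i * ‖x i‖ ^ 2) * (∑ i, p i * ‖y i‖ ^ 2)) ^ ((1 : ℝ) / 2)
        - ∑ i, p i * ((((starRingEnd ℂ) Γ + (starRingEnd ℂ) γ) / (‖Γ + γ‖ : ℂ))
            * (x i * y i)).re
    ∧ ((∑ i, p i * ‖x i‖ ^ 2) * (∑ i, p i * ‖y i‖ ^ 2)) ^ ((1 : ℝ) / 2)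
        - ∑ i, p i * ((((starRingEnd ℂ) Γ + (starRingEnd ℂ) γ) / (‖Γ + γ‖ : ℂ))
            * (x i * y i)).re
      ≤ (1 / 4) * (‖Γ - γ‖ ^ 2 / ‖Γ + γ‖)
        * ∑ i, p i * ‖y i‖ ^ 2 := by
  set A := ∑ i, p i * ‖x i‖ ^ 2 with hAdef
  set B := ∑ i, p i * ‖y i‖ ^ 2 with hBdef
  set S : ℂ := ∑ i, (p i : ℂ) * x i * y i with hSdef
  set t : ℝ := ‖Γ + γ‖ with htdef
  set d : ℝ := ‖Γ - γ‖ with hddef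
  set u : ℂ := ((starRingEnd ℂ) Γ + (starRingEnd ℂ) γ) / (t : ℂ) with hudef
  have hΓγ : Γ + γ ≠ 0 := by
    intro hc; exact hne' (by linear_combination hc)
  have ht : 0 < t := by
    simpa [htdef] using (norm_pos_iff.mpr hΓγ)
  have hA : 0 ≤ A := Finset.sum_nonneg fun i _ => mul_nonneg (hp i) (by positivity)
  have hB : 0 ≤ B := Finset.sum_nonneg fun i _ => mul_nonneg (hp i) (by positivity)
  -- |u| = 1
  have hu1 : ‖u‖ = 1 := by
    have hcc : (starRingEnd ℂ) Γ + (starRingEnd ℂ) γ = (starRingEnd ℂ) (Γ + γ) := by simp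
    rw [hudef, norm_div, hcc, Complex.norm_conj, Complex.norm_real, Real.norm_eq_abs, ← htdef,
      abs_of_pos ht, div_self ht.ne']
  -- R' = (u*S).re
  have hR : ∑ i, p i * (u * (x i * y i)).re = (u * S).re := by
    rw [hSdef, Finset.mul_sum, Complex.re_sum]
    refine Finset.sum_congr rfl fun i _ => ?_
    rw [show u * ((p i : ℂ) * x i * y i) = (p i : ℂ) * (u * (x i * y i)) by ring,
      Complex.re_ofReal_mul]
  -- Cauchy-Schwarz
  have hCS : ‖S‖ ≤ Real.sqrt (A * B) := by
    have h1 : ‖S‖ ≤ ∑ i, (Real.sqrt (p i) * ‖x i‖)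
        * (Real.sqrt (p i) * ‖y i‖) := by
      refine le_trans (norm_sum_le _ _) ?_
      refine le_of_eq (Finset.sum_congr rfl fun i _ => ?_)
      rw [norm_mul, norm_mul, Complex.norm_real, Real.norm_eq_abs, abs_of_nonneg (hp i),
        show (Real.sqrt (p i) * ‖x i‖) * (Real.sqrt (p i) * ‖y i‖)
          = (Real.sqrt (p i) * Real.sqrt (p i)) * (‖x i‖ * ‖y i‖) by ring,
        Real.mul_self_sqrt (hp i)]
      ring
    have h2 : (∑ i, (Real.sqrt (p i) * ‖x i‖)
        * (Real.sqrt (p i) * ‖y i‖)) ^ 2 ≤ A * B := by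
      refine le_trans (Finset.sum_mul_sq_le_sq_mul_sq _ _ _) (le_of_eq ?_)
      rw [hAdef, hBdef]
      congr 1 <;> refine Finset.sum_congr rfl fun i _ => ?_ <;>
        rw [mul_pow, Real.sq_sqrt (hp i)]
    have h3 : (0:ℝ) ≤ ∑ i, (Real.sqrt (p i) * ‖x i‖)
        * (Real.sqrt (p i) * ‖y i‖) :=
      Finset.sum_nonneg fun i _ => by positivity
    exact le_trans h1 ((Real.le_sqrt h3 (mul_nonneg hA hB)).mpr h2)
  -- Expansion of hypothesis
  have htne : (t : ℂ) ≠ 0 := Complex.ofReal_ne_zero.mpr ht.ne'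
  have hconj : (starRingEnd ℂ) (Γ + γ) = (t : ℂ) * u := by
    rw [hudef, mul_div_cancel₀ _ htne]; simp
  have ht2 : t ^ 2 = Complex.normSq (Γ + γ) := by rw [htdef, Complex.sq_norm]
  have hexp : ∀ i, ‖x i - ((γ + Γ) / 2) * (starRingEnd ℂ) (y i)‖ ^ 2
      = ‖x i‖ ^ 2 + t ^ 2 / 4 * ‖y i‖ ^ 2
        - t * (u * (x i * y i)).re := by
    intro i
    have key : Complex.normSq (x i - ((γ + Γ) / 2) * (starRingEnd ℂ) (y i))
        = Complex.normSq (x i) + Complex.normSq (Γ + γ) / 4 * Complex.normSq (y i)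
          - ((starRingEnd ℂ) (Γ + γ) * (x i * y i)).re := by
      rw [Complex.normSq_sub, Complex.normSq_mul, Complex.normSq_conj]
      have h1 : (starRingEnd ℂ) (((γ + Γ) / 2) * (starRingEnd ℂ) (y i))
          = (starRingEnd ℂ) (Γ + γ) / 2 * y i := by
        simp [map_div₀, add_comm, Complex.conj_ofNat]
      rw [h1]
      have h2 : (x i * ((starRingEnd ℂ) (Γ + γ) / 2 * y i))
          = ((starRingEnd ℂ) (Γ + γ) * (x i * y i)) / ((2:ℝ) : ℂ) := by
        push_cast; ring
      rw [h2, Complex.div_ofReal_re]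
      have h3 : Complex.normSq ((γ + Γ) / 2) = Complex.normSq (Γ + γ) / 4 := by
        rw [Complex.normSq_div]
        norm_num [add_comm]
      rw [h3]; ring
    simp only [Complex.sq_norm]
    rw [key, hconj, ht2,
      show (t:ℂ) * u * (x i * y i) = ((t:ℝ):ℂ) * (u * (x i * y i)) by push_cast; ring,
      Complex.re_ofReal_mul]
  -- key inequality from hypothesis
  have hkey : A + t ^ 2 / 4 * B - t * (u * S).re ≤ d ^ 2 / 4 * B := by
    have hsum : ∑ i, p i * ‖x i - ((γ + Γ) / 2) * (starRingEnd ℂ) (y i)‖ ^ 2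
        = A + t ^ 2 / 4 * B - t * (u * S).re := by
      rw [← hR]
      calc ∑ i, p i * ‖x i - ((γ + Γ) / 2) * (starRingEnd ℂ) (y i)‖ ^ 2
          = ∑ i, (p i * ‖x i‖ ^ 2 + t ^ 2 / 4 * (p i * ‖y i‖ ^ 2)
              - t * (p i * (u * (x i * y i)).re)) :=
            Finset.sum_congr rfl fun i _ => by rw [hexp i]; ring
        _ = A + t ^ 2 / 4 * B - t * ∑ i, p i * (u * (x i * y i)).re := by
            rw [Finset.sum_sub_distrib, Finset.sum_add_distrib, ← Finset.mul_sum,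
              ← Finset.mul_sum, hAdef, hBdef]
    rw [hsum] at h
    calc A + t ^ 2 / 4 * B - t * (u * S).re ≤ (1/4) * d^2 * B := h
      _ = d ^ 2 / 4 * B := by ring
  have hRe : (u * S).re ≤ ‖S‖ := by
    calc (u * S).re ≤ ‖u * S‖ := Complex.re_le_norm _
      _ = ‖S‖ := by rw [norm_mul, hu1, one_mul]
  have hrpow : (A * B) ^ ((1:ℝ)/2) = Real.sqrt (A * B) := (Real.sqrt_eq_rpow _).symm
  rw [hrpow, hR]
  -- AM-GM
  have hAMGM : t * Real.sqrt (A * B) ≤ A + t ^ 2 / 4 * B := by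
    have hs : Real.sqrt (A * B) ^ 2 = A * B := Real.sq_sqrt (mul_nonneg hA hB)
    have hs0 : 0 ≤ Real.sqrt (A * B) := Real.sqrt_nonneg _
    have hb0 : 0 ≤ A + t ^ 2 / 4 * B := add_nonneg hA (mul_nonneg (by positivity) hB)
    have hsq : (t * Real.sqrt (A * B)) ^ 2 ≤ (A + t ^ 2 / 4 * B) ^ 2 := by
      nlinarith [sq_nonneg (A - t ^ 2 / 4 * B)]
    have := Real.sqrt_le_sqrt hsq
    rwa [Real.sqrt_sq (mul_nonneg ht.le hs0), Real.sqrt_sq hb0] at this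
  refine ⟨by linarith, by linarith, ?_⟩
  have hfin : t * Real.sqrt (A * B) - t * (u * S).re ≤ d ^ 2 / 4 * B := by linarith
  calc Real.sqrt (A * B) - (u * S).re
      = (t * Real.sqrt (A * B) - t * (u * S).re) / t := by field_simp
    _ ≤ (d ^ 2 / 4 * B) / t := by gcongr
    _ = 1 / 4 * (d ^ 2 / t) * B := by ring
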